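/- arXiv:2412.11805 — 6 statements merged into one kernel-verified Lean document; each statement's English description precedes it below -/
import Mathlib

section
/- For any nonzero real numbers s and t and any odd integer m, there exist a matrix γ in SL₂(ℤ) and a real number r such that γ * (diagonal matrix with entries s, t) * (upper unitriangular matrix with top-right entry r) equals the matrix with rows (m·s, 0) and (2·s, t/m). -/
/-- For any nonzero real numbers `s` and `t` and any odd integer `m`, there exist
`γ ∈ SL₂(ℤ)` and `r ∈ ℝ` such that `γ * diag(s, t) * !![1, r; 0, 1] = !![m*s, 0; 2*s, t/m]`. -/
theorem stmt0 (s t : ℝ) (hs : s ≠ 0) (ht : t ≠ 0) (m : ℤ) (hm : Odd m) :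
    ∃ (γ : Matrix.SpecialLinearGroup (Fin 2) ℤ) (r : ℝ),
      (γ.val.map (fun x : ℤ => (x : ℝ))) * !![s, 0; 0, t] * !![1, r; 0, 1]
        = !![(m : ℝ) * s, 0; 2 * s, t / (m : ℝ)] := by
  obtain ⟨k, hk⟩ := hm
  have hm0 : (m : ℝ) ≠ 0 := by
    intro h
    have : m = 0 := by exact_mod_cast h
    omega
  refine ⟨⟨!![m, k; 2, 1], ?_⟩, -(k : ℝ) * t / ((m : ℝ) * s), ?_⟩
  · simp [Matrix.det_fin_two_of]; omega
  · ext i j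
    fin_cases i <;> fin_cases j <;>
      simp [Matrix.mul_apply, Fin.sum_univ_succ, Matrix.map_apply] <;>
      field_simp <;> push_cast [hk] <;> ring
end

section
/- For every n ≥ 2, every matrix in SL_n(ℚ) can be written as a product γ · p where γ ∈ SL_n(ℤ) and p is an upper triangular matrix in SL_n(ℚ); that is, SL_n(ℚ) = SL_n(ℤ) · P_n(ℚ). -/
open Matrix

namespace Stmt1Aux

lemma natAbs_emod_lt (a : ℤ) {b : ℤ} (h : b ≠ 0) : (a % b).natAbs < b.natAbs := by
  rcases lt_or_gt_of_ne h with hb | hb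
  · have h1 := Int.emod_nonneg a h
    have h2 : a % b < -b := by
      have := Int.emod_lt_of_pos a (b := -b) (by omega)
      rwa [Int.emod_neg] at this
    omega
  · have h1 := Int.emod_nonneg a h
    have h2 := Int.emod_lt_of_pos a hb
    omega

variable {n : ℕ}

/-- `Red k j A B` : `B` is obtained from `A` by left multiplication by a determinant-one
matrix, only rows `k` and `j` are changed, and common zeros of rows `k`, `j` are preserved. -/
def Red (k j : Fin n) (A B : Matrix (Fin n) (Fin n) ℤ) : Prop :=
  (∃ γ : Matrix (Fin n) (Fin n) ℤ, γ.det = 1 ∧ B = γ * A) ∧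
  (∀ r, r ≠ k → r ≠ j → ∀ s, B r s = A r s) ∧
  (∀ s, A k s = 0 → A j s = 0 → B k s = 0 ∧ B j s = 0)

lemma red_refl (k j : Fin n) (A : Matrix (Fin n) (Fin n) ℤ) : Red k j A A :=
  ⟨⟨1, det_one, (one_mul A).symm⟩, fun _ _ _ _ => rfl, fun _ h1 h2 => ⟨h1, h2⟩⟩

lemma red_trans {k j : Fin n} {A B C : Matrix (Fin n) (Fin n) ℤ}
    (h1 : Red k j A B) (h2 : Red k j B C) : Red k j A C := by
  obtain ⟨⟨γ1, hd1, hB⟩, hrow1, hz1⟩ := h1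
  obtain ⟨⟨γ2, hd2, hC⟩, hrow2, hz2⟩ := h2
  refine ⟨⟨γ2 * γ1, by rw [det_mul, hd1, hd2, mul_one], by rw [hC, hB, Matrix.mul_assoc]⟩,
    fun r hk hj s => (hrow2 r hk hj s).trans (hrow1 r hk hj s),
    fun s e1 e2 => hz2 s ((hz1 s e1 e2).1) ((hz1 s e1 e2).2)⟩

lemma red_transvection_kj {k j : Fin n} (h : k ≠ j) (c : ℤ) (A : Matrix (Fin n) (Fin n) ℤ) :
    Red k j A (transvection k j c * A) := by
  refine ⟨⟨_, det_transvection_of_ne k j h c, rfl⟩, ?_, ?_⟩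
  · intro r hk _ s; exact transvection_mul_apply_of_ne k j r s hk c A
  · intro s e1 e2
    refine ⟨?_, ?_⟩
    · rw [transvection_mul_apply_same, e1, e2, mul_zero, add_zero]
    · rw [transvection_mul_apply_of_ne k j j s h.symm, e2]

lemma red_transvection_jk {k j : Fin n} (h : k ≠ j) (c : ℤ) (A : Matrix (Fin n) (Fin n) ℤ) :
    Red k j A (transvection j k c * A) := by
  refine ⟨⟨_, det_transvection_of_ne j k h.symm c, rfl⟩, ?_, ?_⟩
  · intro r _ hj s; exact transvection_mul_apply_of_ne j k r s hj c A
  · intro s e1 e2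
    refine ⟨?_, ?_⟩
    · rw [transvection_mul_apply_of_ne j k k s h, e1]
    · rw [transvection_mul_apply_same, e1, e2, mul_zero, add_zero]

lemma euclid {k j : Fin n} (hkj : k ≠ j) :
    ∀ N : ℕ, ∀ A : Matrix (Fin n) (Fin n) ℤ, (A j k).natAbs < N →
      ∃ B, Red k j A B ∧ B j k = 0 := by
  intro N
  induction N with
  | zero => intro A h; omega
  | succ N ih =>
    intro A hA
    by_cases hb : A j k = 0
    · exact ⟨A, red_refl k j A, hb⟩
    · set a := A k k with ha
      set b := A j k with hbdef
      set q := a / b with hq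
      have hstep1 := red_transvection_kj hkj (-q) A
      set A1 := transvection k j (-q) * A with hA1
      have e1k : A1 j k = b := transvection_mul_apply_of_ne k j j k hkj.symm (-q) A
      have e1kk : A1 k k = a % b := by
        rw [hA1, transvection_mul_apply_same, Int.emod_def, ← ha, ← hbdef, ← hq]; ring
      by_cases hr : a % b = 0
      · have hstep2 := red_transvection_kj hkj 1 A1
        set A2 := transvection k j 1 * A1 with hA2
        have e2kk : A2 k k = b := by
          rw [hA2, transvection_mul_apply_same, e1kk, e1k, hr]; ring
        have e2jk : A2 j k = b := by
          rw [hA2, transvection_mul_apply_of_ne k j j k hkj.symm, e1k]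
        have hstep3 := red_transvection_jk hkj (-1) A2
        set A3 := transvection j k (-1) * A2 with hA3
        have e3 : A3 j k = 0 := by
          rw [hA3, transvection_mul_apply_same, e2jk, e2kk]; ring
        exact ⟨A3, red_trans (red_trans hstep1 hstep2) hstep3, e3⟩
      · have hstep2 := red_transvection_jk hkj (-(b / (a % b))) A1
        set A2 := transvection j k (-(b / (a % b))) * A1 with hA2
        have e2 : A2 j k = b % (a % b) := by
          rw [hA2, transvection_mul_apply_same, e1k, e1kk, Int.emod_def b (a % b)]; ring
        have hlt : (A2 j k).natAbs < N := by
          have h1 : (b % (a % b)).natAbs < (a % b).natAbs := natAbs_emod_lt _ hr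
          have h2 : (a % b).natAbs < b.natAbs := natAbs_emod_lt _ hb
          rw [e2]; omega
        obtain ⟨B, hred, hB⟩ := ih A2 hlt
        exact ⟨B, red_trans (red_trans hstep1 hstep2) hred, hB⟩

lemma clearColAux (k : Fin n) :
    ∀ t : ℕ, ∀ A : Matrix (Fin n) (Fin n) ℤ,
      (∀ i j' : Fin n, (j' : ℕ) < (k : ℕ) → (j' : ℕ) < (i : ℕ) → A i j' = 0) →
      (∀ i : Fin n, (k : ℕ) + t < (i : ℕ) → A i k = 0) →
      ∃ B, (∃ γ : Matrix (Fin n) (Fin n) ℤ, γ.det = 1 ∧ B = γ * A) ∧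
        (∀ i j' : Fin n, (j' : ℕ) < (k : ℕ) → (j' : ℕ) < (i : ℕ) → B i j' = 0) ∧
        (∀ i : Fin n, (k : ℕ) < (i : ℕ) → B i k = 0) := by
  intro t
  induction t with
  | zero =>
    intro A H1 H2
    exact ⟨A, ⟨1, det_one, (one_mul A).symm⟩, H1, fun i hi => H2 i (by omega)⟩
  | succ t ih =>
    intro A H1 H2
    by_cases hn' : (k : ℕ) + t + 1 < n
    · set j0 : Fin n := ⟨(k : ℕ) + t + 1, hn'⟩ with hj0
      have hj0v : (j0 : ℕ) = (k : ℕ) + t + 1 := rfl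
      have hkj : k ≠ j0 := by
        intro h
        have : (k : ℕ) = (j0 : ℕ) := by rw [h]
        omega
      obtain ⟨B, ⟨⟨γ1, hd1, hBe⟩, hrow, hz⟩, hBjk⟩ :=
        euclid hkj ((A j0 k).natAbs + 1) A (by omega)
      have H1B : ∀ i j' : Fin n, (j' : ℕ) < (k : ℕ) → (j' : ℕ) < (i : ℕ) → B i j' = 0 := by
        intro i j' h1 h2
        by_cases hik : i = k
        · rw [hik]
          exact (hz j' (H1 k j' h1 h1) (H1 j0 j' h1 (by omega))).1
        · by_cases hij : i = j0
          · rw [hij]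
            exact (hz j' (H1 k j' h1 h1) (H1 j0 j' h1 (by omega))).2
          · rw [hrow i hik hij]; exact H1 i j' h1 h2
      have H2B : ∀ i : Fin n, (k : ℕ) + t < (i : ℕ) → B i k = 0 := by
        intro i hi
        by_cases hij : i = j0
        · rw [hij]; exact hBjk
        · have hik : i ≠ k := by
            intro h
            have : (i : ℕ) = (k : ℕ) := by rw [h]
            omega
          rw [hrow i hik hij]
          apply H2
          have hne : (i : ℕ) ≠ (k : ℕ) + t + 1 := by
            intro h
            exact hij (Fin.ext (by rw [h, hj0v]))
          omega
      obtain ⟨C, ⟨γ2, hd2, hCe⟩, HC1, HC2⟩ := ih B H1B H2B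
      exact ⟨C, ⟨γ2 * γ1, by rw [det_mul, hd1, hd2, mul_one],
        by rw [hCe, hBe, Matrix.mul_assoc]⟩, HC1, HC2⟩
    · exact ih A H1 (fun i hi => absurd hi (by have := i.isLt; omega))

lemma hnf : ∀ (m : ℕ) (A : Matrix (Fin n) (Fin n) ℤ),
    ∃ γ : Matrix (Fin n) (Fin n) ℤ, γ.det = 1 ∧
      ∀ i j' : Fin n, (j' : ℕ) < m → (j' : ℕ) < (i : ℕ) → (γ * A) i j' = 0 := by
  intro m
  induction m with
  | zero =>
    intro A
    exact ⟨1, det_one, fun i j' h _ => absurd h (Nat.not_lt_zero _)⟩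
  | succ m ih =>
    intro A
    obtain ⟨γ1, hd1, h1⟩ := ih A
    by_cases hm : m < n
    · set k : Fin n := ⟨m, hm⟩ with hk
      have hkv : (k : ℕ) = m := rfl
      obtain ⟨B, ⟨γ2, hd2, hBe⟩, HB1, HB2⟩ := clearColAux k n (γ1 * A)
        (fun i j' ha hb => h1 i j' (by omega) hb)
        (fun i hi => absurd hi (by have := i.isLt; omega))
      refine ⟨γ2 * γ1, by rw [det_mul, hd1, hd2, mul_one], ?_⟩
      intro i j' hj hij
      have hBA : (γ2 * γ1) * A = B := by rw [Matrix.mul_assoc, ← hBe]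
      rw [hBA]
      by_cases hjm : (j' : ℕ) < m
      · exact HB1 i j' (by omega) hij
      · have hjem : (j' : ℕ) = m := by omega
        have hjk : j' = k := Fin.ext (by rw [hjem, hkv])
        rw [hjk]
        exact HB2 i (by omega)
    · exact ⟨γ1, hd1, fun i j' hj hij => h1 i j' (by have := j'.isLt; omega) hij⟩

end Stmt1Aux

/-- For every `n ≥ 2`, every matrix in `SL_n(ℚ)` is a product `γ * p` with
`γ ∈ SL_n(ℤ)` (viewed in `SL_n(ℚ)` via the inclusion `ℤ → ℚ`) and `p` upper triangular in
`SL_n(ℚ)`; that is, `SL_n(ℚ) = SL_n(ℤ) · P_n(ℚ)`. -/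
theorem stmt1 (n : ℕ) (hn : 2 ≤ n) (g : Matrix.SpecialLinearGroup (Fin n) ℚ) :
    ∃ (γ : Matrix.SpecialLinearGroup (Fin n) ℤ) (p : Matrix.SpecialLinearGroup (Fin n) ℚ),
      (∀ i j : Fin n, j < i → p.val i j = 0) ∧
      g = Matrix.SpecialLinearGroup.map (Int.castRingHom ℚ) γ * p := by
  classical
  set d : ℤ := ∏ i : Fin n, ∏ j : Fin n, ((g.val i j).den : ℤ) with hd
  have hdpos : 0 < d := by
    apply Finset.prod_pos
    intro i _
    apply Finset.prod_pos
    intro j _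
    exact_mod_cast (g.val i j).pos
  have hint : ∀ i j : Fin n, ∃ z : ℤ, (z : ℚ) = (d : ℚ) * g.val i j := by
    intro i j
    have h1 : ((g.val i j).den : ℤ) ∣ ∏ j' : Fin n, ((g.val i j').den : ℤ) :=
      Finset.dvd_prod_of_mem _ (Finset.mem_univ j)
    have h2 : (∏ j' : Fin n, ((g.val i j').den : ℤ)) ∣ d := by
      rw [hd]
      exact Finset.dvd_prod_of_mem _ (Finset.mem_univ i)
    obtain ⟨c, hc⟩ := h1.trans h2
    refine ⟨c * (g.val i j).num, ?_⟩
    have key : ((g.val i j).den : ℚ) * g.val i j = ((g.val i j).num : ℚ) := by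
      rw [mul_comm, Rat.mul_den_eq_num]
    rw [hc]
    push_cast
    rw [← key]
    ring
  choose A hA using hint
  obtain ⟨γ0, hdet, hzero⟩ := Stmt1Aux.hnf n (Matrix.of A)
  set γ : Matrix.SpecialLinearGroup (Fin n) ℤ := ⟨γ0, hdet⟩ with hγ
  set Γ : Matrix.SpecialLinearGroup (Fin n) ℚ :=
    Matrix.SpecialLinearGroup.map (Int.castRingHom ℚ) γ with hΓ
  refine ⟨γ⁻¹, Γ * g, ?_, ?_⟩
  · intro i j hij
    have hΓval : ∀ a b : Fin n, Γ.val a b = ((γ0 a b : ℤ) : ℚ) := by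
      intro a b
      rw [hΓ, Matrix.SpecialLinearGroup.map_apply_coe]
      rfl
    have hmul : (Γ * g).val i j = ∑ s : Fin n, Γ.val i s * g.val s j := by
      rw [Matrix.SpecialLinearGroup.coe_mul, Matrix.mul_apply]
    have hdq : (d : ℚ) * (Γ * g).val i j = 0 := by
      rw [hmul, Finset.mul_sum]
      have : ∀ s : Fin n, (d : ℚ) * (Γ.val i s * g.val s j)
          = ((γ0 i s : ℤ) : ℚ) * ((A s j : ℤ) : ℚ) := by
        intro s
        rw [hΓval, hA]
        ring
      rw [Finset.sum_congr rfl (fun s _ => this s)]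
      have hc : ∑ s : Fin n, ((γ0 i s : ℤ) : ℚ) * ((A s j : ℤ) : ℚ)
          = (((γ0 * Matrix.of A) i j : ℤ) : ℚ) := by
        rw [Matrix.mul_apply]
        push_cast
        rfl
      rw [hc, hzero i j (by omega) (by exact hij)]
      norm_num
    have hdne : (d : ℚ) ≠ 0 := by
      exact_mod_cast hdpos.ne'
    exact (mul_eq_zero.mp hdq).resolve_left hdne
  · rw [map_inv]
    rw [← hΓ]
    group
end

section
/- The group SL₂(ℤ) acts transitively on the elements of order n in the torus 𝕋² = (ℝ/ℤ)²: if z and z' are elements of (ℝ/ℤ)² both of exact order n, then there exists γ ∈ SL₂(ℤ) with γ·z = z'. -/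
open Matrix

private lemma myAct_mul (M N : Matrix (Fin 2) (Fin 2) ℤ) (v : Fin 2 → AddCircle (1:ℝ)) :
    (fun i => ∑ j, (M * N) i j • v j) =
      (fun i => ∑ j, M i j • (fun i' => ∑ j', N i' j' • v j') j) := by
  funext i
  simp only [Matrix.mul_apply, Finset.sum_smul, mul_smul, Finset.smul_sum]
  rw [Finset.sum_comm]

private lemma myAct_one (v : Fin 2 → AddCircle (1:ℝ)) :
    (fun i => ∑ j, (1 : Matrix (Fin 2) (Fin 2) ℤ) i j • v j) = v := by
  funext i
  simp [Matrix.one_apply]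

private lemma coe_int_zero (m : ℤ) : (((m : ℝ)) : AddCircle (1:ℝ)) = 0 := by
  rw [AddCircle.coe_eq_zero_iff]; exact ⟨m, by simp⟩

private lemma int_step (a b : ℤ) (n : ℕ) (h : Int.gcd (Int.gcd a b : ℤ) (n : ℤ) = 1) :
    ∃ γ : Matrix.SpecialLinearGroup (Fin 2) ℤ, ∃ k l : ℤ,
      γ.val.mulVec ![a, b] = ![1 + k * n, l * n] := by
  by_cases hg0 : Int.gcd a b = 0
  · obtain ⟨ha, hb⟩ := Int.gcd_eq_zero_iff.mp hg0
    have hn1 : n = 1 := by simpa [hg0] using h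
    refine ⟨1, -1, 0, ?_⟩
    subst ha hb hn1
    funext i
    fin_cases i <;> simp [Matrix.mulVec, dotProduct, Fin.sum_univ_two]
  · set g : ℤ := (Int.gcd a b : ℤ) with hgdef
    set x := Int.gcdA a b
    set y := Int.gcdB a b
    have hxy : a * x + b * y = g := (Int.gcd_eq_gcd_ab a b).symm
    have hga : g ∣ a := Int.gcd_dvd_left a b
    have hgb : g ∣ b := Int.gcd_dvd_right a b
    obtain ⟨a', ha'⟩ := hga
    obtain ⟨b', hb'⟩ := hgb
    have hgne : g ≠ 0 := by
      simpa [hgdef] using hg0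
    have hdet1 : x * a' + y * b' = 1 := by
      have h2 : g * (x * a' + y * b') = g * 1 := by
        rw [mul_one]; nth_rewrite 2 [← hxy]; rw [ha', hb']; ring
      exact mul_left_cancel₀ hgne h2
    set u := Int.gcdA g n
    set v := Int.gcdB g n
    have huv : g * u + n * v = 1 := by
      have := (Int.gcd_eq_gcd_ab g (n : ℤ)).symm
      rw [h] at this; exact_mod_cast this
    refine ⟨⟨!![u, v; -(n:ℤ), g], ?_⟩ * ⟨!![x, y; -b', a'], ?_⟩, -v, -g, ?_⟩
    · rw [Matrix.det_fin_two_of]; linarith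
    · rw [Matrix.det_fin_two_of]; linarith
    · show (!![u, v; -(n:ℤ), g] * !![x, y; -b', a']).mulVec ![a, b] = _
      rw [← Matrix.mulVec_mulVec]
      have h1 : (!![x, y; -b', a']).mulVec ![a, b] = ![g, 0] := by
        funext i
        fin_cases i
        · simp [Matrix.mulVec, dotProduct, Fin.sum_univ_two, ha', hb']
          linear_combination g * hdet1
        · simp [Matrix.mulVec, dotProduct, Fin.sum_univ_two, ha', hb']
          ring
      rw [h1]
      funext i
      fin_cases i
      · simp [Matrix.mulVec, dotProduct, Fin.sum_univ_two]
        linarith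
      · simp [Matrix.mulVec, dotProduct, Fin.sum_univ_two]
        ring

private lemma key (n : ℕ) (hn : 0 < n) (z : Fin 2 → AddCircle (1:ℝ))
    (hz : addOrderOf z = n) :
    ∃ γ : Matrix.SpecialLinearGroup (Fin 2) ℤ,
      (fun i => ∑ j, γ.val i j • z j) = ![(((n:ℝ)⁻¹ : ℝ) : AddCircle (1:ℝ)), 0] := by
  have hnR : (n : ℝ) ≠ 0 := Nat.cast_ne_zero.mpr hn.ne'
  -- step 1: coordinates
  have hzn : n • z = 0 := by rw [← hz]; exact addOrderOf_nsmul_eq_zero z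
  have hcex : ∀ i, ∃ c : ℤ, z i = (((c : ℝ) / n) : ℝ) := by
    intro i
    obtain ⟨x, hx⟩ := QuotientAddGroup.mk_surjective (z i)
    have h0 : (n : ℕ) • z i = 0 := by
      have := congrFun hzn i
      simpa using this
    rw [← hx, ← AddCircle.coe_nsmul, AddCircle.coe_eq_zero_iff] at h0
    obtain ⟨m, hm⟩ := h0
    refine ⟨m, ?_⟩
    rw [← hx]
    congr 1
    have : (m : ℝ) = n * x := by simpa [smul_eq_mul] using hm
    field_simp [this]
    linear_combination -this
  choose c hcz using hcex
  -- step 2: gcd condition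
  have hgcd : Int.gcd (Int.gcd (c 0) (c 1) : ℤ) (n : ℤ) = 1 := by
    set d : ℕ := Int.gcd (Int.gcd (c 0) (c 1) : ℤ) (n : ℤ) with hd
    have hdn : d ∣ n := by
      have : (d : ℤ) ∣ (n : ℤ) := Int.gcd_dvd_right _ _
      exact_mod_cast this
    have hd0 : 0 < d := Nat.pos_of_dvd_of_pos hdn hn
    have hdc : ∀ i, (d : ℤ) ∣ c i := by
      intro i
      have h1 : (d : ℤ) ∣ (Int.gcd (c 0) (c 1) : ℤ) := Int.gcd_dvd_left _ _
      fin_cases i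
      · exact h1.trans (Int.gcd_dvd_left _ _)
      · exact h1.trans (Int.gcd_dvd_right _ _)
    have h0 : (n / d) • z = 0 := by
      funext i
      have hce : c i = (d:ℤ) * (c i / (d:ℤ)) := (Int.mul_ediv_cancel' (hdc i)).symm
      have hnf : n = d * (n / d) := (Nat.mul_div_cancel' hdn).symm
      have hF0 : 0 < n / d := Nat.div_pos (Nat.le_of_dvd hn hdn) hd0
      rw [Pi.smul_apply, Pi.zero_apply, hcz i, ← AddCircle.coe_nsmul,
        AddCircle.coe_eq_zero_iff]
      refine ⟨c i / (d:ℤ), ?_⟩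
      have h1 : ((c i : ℝ)) = (d:ℝ) * ((c i / (d:ℤ) : ℤ):ℝ) := by exact_mod_cast hce
      have h2 : ((n:ℝ)) = (d:ℝ) * ((n/d : ℕ):ℝ) := by exact_mod_cast hnf
      have hdR : (d:ℝ) ≠ 0 := Nat.cast_ne_zero.mpr hd0.ne'
      have hFR : ((n/d : ℕ):ℝ) ≠ 0 := Nat.cast_ne_zero.mpr hF0.ne'
      simp only [zsmul_eq_mul, nsmul_eq_mul, smul_eq_mul, mul_one]
      rw [h1, h2]
      field_simp
    have hdvd : n ∣ n / d := by
      have h3 := addOrderOf_dvd_of_nsmul_eq_zero h0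
      rwa [hz] at h3
    have heq : n / d = n := Nat.dvd_antisymm (Nat.div_dvd_of_dvd hdn) hdvd
    have : n * d = n * 1 := by
      conv_lhs => rw [← heq]
      rw [Nat.div_mul_cancel hdn, mul_one]
    exact Nat.eq_of_mul_eq_mul_left hn this
  -- step 3: integer matrix
  obtain ⟨γ, k, l, hγ⟩ := int_step (c 0) (c 1) n hgcd
  refine ⟨γ, ?_⟩
  have hγ0 : γ.val 0 0 * c 0 + γ.val 0 1 * c 1 = 1 + k * n := by
    have := congrFun hγ 0
    simpa [Matrix.mulVec, dotProduct, Fin.sum_univ_two] using this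
  have hγ1 : γ.val 1 0 * c 0 + γ.val 1 1 * c 1 = l * n := by
    have := congrFun hγ 1
    simpa [Matrix.mulVec, dotProduct, Fin.sum_univ_two] using this
  funext i
  fin_cases i
  · simp only [Fin.sum_univ_two, Fin.isValue]
    show γ.val 0 0 • z 0 + γ.val 0 1 • z 1 = (((n:ℝ)⁻¹ : ℝ) : AddCircle (1:ℝ))
    rw [hcz 0, hcz 1, ← AddCircle.coe_zsmul, ← AddCircle.coe_zsmul,
      ← AddCircle.coe_add]
    have hcast : (γ.val 0 0 : ℝ) * (c 0 : ℝ) + (γ.val 0 1 : ℝ) * (c 1 : ℝ)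
        = 1 + (k:ℝ) * (n:ℝ) := by exact_mod_cast hγ0
    have hre : (γ.val 0 0) • ((c 0 : ℝ)/n) + (γ.val 0 1) • ((c 1 : ℝ)/n)
        = (n:ℝ)⁻¹ + (k : ℝ) := by
      simp only [zsmul_eq_mul]
      field_simp
      linear_combination hcast
    rw [hre, AddCircle.coe_add, coe_int_zero, add_zero]
  · simp only [Fin.sum_univ_two, Fin.isValue]
    show γ.val 1 0 • z 0 + γ.val 1 1 • z 1 = (0 : AddCircle (1:ℝ))
    rw [hcz 0, hcz 1, ← AddCircle.coe_zsmul, ← AddCircle.coe_zsmul,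
      ← AddCircle.coe_add]
    have hcast : (γ.val 1 0 : ℝ) * (c 0 : ℝ) + (γ.val 1 1 : ℝ) * (c 1 : ℝ)
        = (l:ℝ) * (n:ℝ) := by exact_mod_cast hγ1
    have hre : (γ.val 1 0) • ((c 0 : ℝ)/n) + (γ.val 1 1) • ((c 1 : ℝ)/n)
        = ((l : ℝ)) := by
      simp only [zsmul_eq_mul]
      field_simp
      linear_combination hcast
    rw [hre, coe_int_zero]

/-- `SL₂(ℤ)` acts transitively on the elements of (finite) order `n` in the torus
`𝕋² = (ℝ/ℤ)²`: if `z, z'` both have exact order `n`, there is `γ ∈ SL₂(ℤ)` with `γ·z = z'`,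
where `γ` acts linearly via `(γ·z) i = ∑ j, γ i j • z j`. -/
theorem stmt2 (n : ℕ) (hn : 0 < n) (z z' : Fin 2 → AddCircle (1 : ℝ))
    (hz : addOrderOf z = n) (hz' : addOrderOf z' = n) :
    ∃ γ : Matrix.SpecialLinearGroup (Fin 2) ℤ,
      (fun i => ∑ j, γ.val i j • z j) = z' := by
  obtain ⟨γ₁, h₁⟩ := key n hn z hz
  obtain ⟨γ₂, h₂⟩ := key n hn z' hz'
  refine ⟨γ₂⁻¹ * γ₁, ?_⟩
  have hcoe : ((γ₂⁻¹ * γ₁ : Matrix.SpecialLinearGroup (Fin 2) ℤ) : Matrix (Fin 2) (Fin 2) ℤ)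
      = (γ₂⁻¹ : Matrix.SpecialLinearGroup (Fin 2) ℤ).val * γ₁.val := rfl
  rw [hcoe, myAct_mul, h₁, ← h₂, ← myAct_mul]
  have : ((γ₂⁻¹ : Matrix.SpecialLinearGroup (Fin 2) ℤ).val * γ₂.val)
      = ((γ₂⁻¹ * γ₂ : Matrix.SpecialLinearGroup (Fin 2) ℤ) : Matrix (Fin 2) (Fin 2) ℤ) := rfl
  rw [this, inv_mul_cancel]
  exact myAct_one z'
end

section
/- Let G = SL₃(ℝ) and Γ = SL₃(ℤ). If γ ∈ Γ stabilizes the point gU₃(ℝ) ∈ G/U₃(ℝ) where g = A₁(r,θ) is the matrix with rows (1,0,0), (θ,r,0), (0,0,r⁻¹) for r > 0 and θ irrational, then γ belongs to the subgroup Γ₁ of integer matrices of the form with rows (1,0,m), (0,1,k), (0,0,1), m,k ∈ ℤ; conversely every element of Γ₁ stabilizes gU₃(ℝ). -/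
/-- A `3×3` real matrix is unipotent upper triangular. -/
def IsUnipUpper (M : Matrix (Fin 3) (Fin 3) ℝ) : Prop :=
  M 0 0 = 1 ∧ M 1 1 = 1 ∧ M 2 2 = 1 ∧ M 1 0 = 0 ∧ M 2 0 = 0 ∧ M 2 1 = 0

/-- The subgroup `U = U₃(ℝ)` of unipotent upper triangular matrices in `G = SL₃(ℝ)`. -/
def U3R : Subgroup (Matrix.SpecialLinearGroup (Fin 3) ℝ) where
  carrier := {g | IsUnipUpper g.val}
  one_mem' := by
    refine ⟨?_, ?_, ?_, ?_, ?_, ?_⟩ <;>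
      simp [Matrix.SpecialLinearGroup.coe_one, Matrix.one_apply]
  mul_mem' := by
    rintro a b ⟨ha1, ha2, ha3, ha4, ha5, ha6⟩ ⟨hb1, hb2, hb3, hb4, hb5, hb6⟩
    refine ⟨?_, ?_, ?_, ?_, ?_, ?_⟩ <;>
      simp [Matrix.SpecialLinearGroup.coe_mul, Matrix.mul_apply, Fin.sum_univ_three,
        ha1, ha2, ha3, ha4, ha5, ha6, hb1, hb2, hb3, hb4, hb5, hb6]
  inv_mem' := by
    rintro a ⟨ha1, ha2, ha3, ha4, ha5, ha6⟩
    refine ⟨?_, ?_, ?_, ?_, ?_, ?_⟩ <;>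
      simp [Matrix.SpecialLinearGroup.coe_inv, Matrix.adjugate_fin_three,
        Matrix.vecHead, Matrix.vecTail,
        ha1, ha2, ha3, ha4, ha5, ha6]

/-- The matrix `A₁(r,θ)` with rows `(1,0,0)`, `(θ,r,0)`, `(0,0,r⁻¹)`, as an element of
`SL₃(ℝ)` (for `r ≠ 0`). -/
noncomputable def A1 (r θ : ℝ) (hr : r ≠ 0) : Matrix.SpecialLinearGroup (Fin 3) ℝ :=
  ⟨!![1, 0, 0; θ, r, 0; 0, 0, r⁻¹], by
    simp [Matrix.det_fin_three, mul_inv_cancel₀ hr]⟩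

lemma key_irr {θ : ℝ} (hθ : Irrational θ) (p q c : ℤ)
    (h : (p : ℝ) + (q : ℝ) * θ = (c : ℝ)) : q = 0 ∧ p = c := by
  have hq : q = 0 := by
    by_contra hq
    have hq' : (q : ℝ) ≠ 0 := Int.cast_ne_zero.mpr hq
    have hθ' : θ = ((((c - p : ℤ) : ℚ) / ((q : ℤ) : ℚ) : ℚ) : ℝ) := by
      push_cast
      field_simp
      linarith
    exact (Rat.not_irrational _) (hθ' ▸ hθ)
  subst hq
  simp at h
  exact ⟨rfl, by exact_mod_cast h⟩

lemma A1_coe (r θ : ℝ) (hr : r ≠ 0) :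
    ((A1 r θ hr : Matrix.SpecialLinearGroup (Fin 3) ℝ) : Matrix (Fin 3) (Fin 3) ℝ)
      = !![1, 0, 0; θ, r, 0; 0, 0, r⁻¹] := rfl

set_option maxHeartbeats 1000000 in
/-- if `γ ∈ Γ = SL₃(ℤ)` stabilizes the point `A₁(r,θ)·U₃(ℝ) ∈ SL₃(ℝ)/U₃(ℝ)`
for `r > 0` and `θ` irrational, then `γ` belongs to the subgroup `Γ₁` of integer matrices
with rows `(1,0,m)`, `(0,1,k)`, `(0,0,1)`; conversely every element of `Γ₁` stabilizes it. -/
theorem stmt12 (r θ : ℝ) (hr : 0 < r) (hθ : Irrational θ)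
    (γ : Matrix.SpecialLinearGroup (Fin 3) ℤ) :
    (QuotientGroup.mk (Matrix.SpecialLinearGroup.map (Int.castRingHom ℝ) γ * A1 r θ hr.ne') :
        Matrix.SpecialLinearGroup (Fin 3) ℝ ⧸ U3R) = QuotientGroup.mk (A1 r θ hr.ne')
      ↔ ∃ m k : ℤ, γ.val = !![1, 0, m; 0, 1, k; 0, 0, 1] := by
  have hrne : r ≠ 0 := hr.ne'
  rw [eq_comm, QuotientGroup.eq]
  have hmem : ∀ x : Matrix.SpecialLinearGroup (Fin 3) ℝ, x ∈ U3R ↔ IsUnipUpper x.val :=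
    fun x => Iff.rfl
  rw [hmem]
  simp [IsUnipUpper, Matrix.SpecialLinearGroup.coe_mul, Matrix.SpecialLinearGroup.coe_inv,
    Matrix.SpecialLinearGroup.map_apply_coe, RingHom.mapMatrix_apply, A1_coe,
    Matrix.adjugate_fin_three, Matrix.mul_apply, Fin.sum_univ_three, Matrix.map_apply, hrne,
    mul_inv_cancel₀, inv_mul_cancel₀]
  have hinv : r⁻¹ * r = 1 := inv_mul_cancel₀ hrne
  have hinv' : r * r⁻¹ = 1 := mul_inv_cancel₀ hrne
  constructor
  · rintro ⟨h1, h2, h3, h4, h5, h6⟩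
    obtain ⟨hb, ha⟩ := key_irr hθ (γ.val 0 0) (γ.val 0 1) 1 (by push_cast; linarith)
    have h2' : ((γ.val 1 1 : ℤ) : ℝ) + ((-(γ.val 0 1) : ℤ) : ℝ) * θ = ((1 : ℤ) : ℝ) := by
      rw [show -(θ * r⁻¹ * (((γ.val 0 1 : ℤ) : ℝ) * r)) + r⁻¹ * (((γ.val 1 1 : ℤ) : ℝ) * r)
          = (((γ.val 1 1 : ℤ) : ℝ) + (-((γ.val 0 1 : ℤ) : ℝ)) * θ) * (r⁻¹ * r) by ring,
        hinv, mul_one] at h2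
      push_cast
      linarith
    obtain ⟨-, he⟩ := key_irr hθ (γ.val 1 1) (-(γ.val 0 1)) 1 h2'
    have hi : γ.val 2 2 = 1 := by
      rw [show r * (((γ.val 2 2 : ℤ) : ℝ) * r⁻¹) = ((γ.val 2 2 : ℤ) : ℝ) * (r * r⁻¹) by ring,
        hinv', mul_one] at h3
      exact_mod_cast h3
    have hg : γ.val 2 0 = 0 := by
      rw [h6] at h5
      push_cast at h5
      have : ((γ.val 2 0 : ℤ) : ℝ) = 0 := by linarith
      exact_mod_cast this
    have hd : γ.val 1 0 = 0 := by
      push_cast [ha, hb, he] at h4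
      have h4' : r⁻¹ * ((γ.val 1 0 : ℤ) : ℝ) = 0 := by linarith
      rcases mul_eq_zero.mp h4' with h | h
      · exact absurd h (inv_ne_zero hrne)
      · exact_mod_cast h
    refine ⟨γ.val 0 2, γ.val 1 2, ?_⟩
    ext i j
    fin_cases i <;> fin_cases j <;>
      simp [ha, hb, he, hi, h6, hg, hd, Matrix.vecHead, Matrix.vecTail]
  · rintro ⟨m, k, hγ⟩
    refine ⟨?_, ?_, ?_, ?_, ?_, ?_⟩ <;>
      · simp [hγ, Matrix.vecHead, Matrix.vecTail, hrne]
        try ring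
end

section
/- Let A be a C*-algebra, π an irreducible representation of A, and (π_i)_{i∈I} a family of nondegenerate representations of A. If some vector state of π (i.e., a state of the form a ↦ ⟨π(a)ξ, ξ⟩ for a unit vector ξ) lies in the weak* closure of the set of all vector states of the representations π_i, then every vector state of π lies in that weak* closure, and π is weakly contained in ⊕_i π_i (i.e., ⋂_i ker π_i ⊆ ker π). -/
open scoped ComplexInnerProductSpace

section Aux

variable {A : Type} [NormedRing A] [StarRing A] [CStarRing A] [NormedAlgebra ℂ A]
    [StarModule ℂ A] [CompleteSpace A]
    {K : Type} [NormedAddCommGroup K] [InnerProductSpace ℂ K] [CompleteSpace K]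

lemma fell_aux_inner (ρ : A →⋆ₐ[ℂ] (K →L[ℂ] K)) (b a c : A) (x y : K) :
    ⟪ρ (star b * a * c) x, y⟫ = ⟪ρ a (ρ c x), ρ b y⟫ := by
  simp [map_mul, map_star, ContinuousLinearMap.star_eq_adjoint, ContinuousLinearMap.mul_apply,
    ContinuousLinearMap.adjoint_inner_left]

lemma fell_aux_inner2 (ρ : A →⋆ₐ[ℂ] (K →L[ℂ] K)) (c : A) (x : K) :
    ⟪ρ (star c * c) x, x⟫ = (‖ρ c x‖ : ℂ) ^ 2 := by
  have : ⟪ρ (star c * c) x, x⟫ = ⟪ρ c x, ρ c x⟫ := by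
    simp [map_mul, map_star, ContinuousLinearMap.star_eq_adjoint, ContinuousLinearMap.mul_apply,
      ContinuousLinearMap.adjoint_inner_left]
  rw [this, inner_self_eq_norm_sq_to_K]
  norm_cast

lemma fell_aux_norm (ρ : A →⋆ₐ[ℂ] (K →L[ℂ] K)) (a : A) (x : K) :
    ‖ρ a x‖ ≤ ‖a‖ * ‖x‖ := by
  letI : CStarAlgebra A := ⟨⟩
  refine (ContinuousLinearMap.le_opNorm _ _).trans ?_
  gcongr
  exact NonUnitalStarAlgHom.norm_apply_le ρ a

end Aux

set_option maxHeartbeats 1000000 in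
/-- Fell: Let `A` be a C*-algebra, `π` an irreducible representation of `A`
(irreducibility: every nonzero vector is cyclic) and `(πᵢ)` a family of nondegenerate
representations.  If some vector state of `π` lies in the weak* closure of the set of all
vector states of the `πᵢ` (closure expressed by approximation on finite sets), then every
vector state of `π` lies in that closure, and `π` is weakly contained in `⊕ᵢ πᵢ`, i.e.
`⋂ᵢ ker πᵢ ⊆ ker π`. -/
theorem stmt14 (A : Type) [NormedRing A] [StarRing A] [CStarRing A] [NormedAlgebra ℂ A]
    [StarModule ℂ A] [CompleteSpace A]
    (H : Type) [NormedAddCommGroup H] [InnerProductSpace ℂ H] [CompleteSpace H] [Nontrivial H]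
    (π : A →⋆ₐ[ℂ] (H →L[ℂ] H))
    (hirr : ∀ ξ : H, ξ ≠ 0 → Dense (Set.range fun a : A => π a ξ))
    (I : Type) (Hi : I → Type)
    [∀ i, NormedAddCommGroup (Hi i)] [∀ i, InnerProductSpace ℂ (Hi i)]
    [∀ i, CompleteSpace (Hi i)]
    (πi : ∀ i, A →⋆ₐ[ℂ] (Hi i →L[ℂ] Hi i))
    (hnd : ∀ i, Dense ((Submodule.span ℂ {y : Hi i | ∃ (a : A) (ξ : Hi i), πi i a ξ = y} :
      Submodule ℂ (Hi i)) : Set (Hi i)))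
    (ξ₀ : H) (hξ₀ : ‖ξ₀‖ = 1)
    (h0 : ∀ (F : Finset A) (ε : ℝ), 0 < ε → ∃ (i : I) (η : Hi i), ‖η‖ = 1 ∧
      ∀ a ∈ F, ‖⟪π a ξ₀, ξ₀⟫ - ⟪πi i a η, η⟫‖ < ε) :
    (∀ ξ : H, ‖ξ‖ = 1 → ∀ (F : Finset A) (ε : ℝ), 0 < ε → ∃ (i : I) (η : Hi i), ‖η‖ = 1 ∧
      ∀ a ∈ F, ‖⟪π a ξ, ξ⟫ - ⟪πi i a η, η⟫‖ < ε)
    ∧ (∀ a : A, (∀ i, πi i a = 0) → π a = 0) := by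
  classical
  have hξ₀ne : ξ₀ ≠ 0 := by
    intro h; rw [h, norm_zero] at hξ₀; norm_num at hξ₀
  constructor
  · -- Part 1
    intro ξ hξ F ε hε
    -- bound on elements of F
    obtain ⟨M, hM1, hMb⟩ : ∃ M : ℝ, 1 ≤ M ∧ ∀ a ∈ F, ‖a‖ ≤ M := by
      refine ⟨1 + ((F.sup fun a => ‖a‖₊ : NNReal) : ℝ),
        le_add_of_nonneg_right (by positivity), fun a ha => ?_⟩
      have h1 : ‖a‖₊ ≤ F.sup (fun a => ‖a‖₊) := Finset.le_sup ha
      have h2 : (‖a‖₊ : ℝ) ≤ ((F.sup fun a => ‖a‖₊ : NNReal) : ℝ) := by exact_mod_cast h1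
      calc ‖a‖ = (‖a‖₊ : ℝ) := rfl
      _ ≤ ((F.sup fun a => ‖a‖₊ : NNReal) : ℝ) := h2
      _ ≤ 1 + ((F.sup fun a => ‖a‖₊ : NNReal) : ℝ) := by linarith
    have hM0 : (0:ℝ) < M := lt_of_lt_of_le one_pos hM1
    set δ : ℝ := min (1/8) (ε / (16 * M)) with hδdef
    have hδpos : 0 < δ := lt_min (by norm_num) (by positivity)
    have hδ8 : δ ≤ 1/8 := min_le_left _ _
    have hδε : δ ≤ ε / (16 * M) := min_le_right _ _
    -- choose c with ‖π c ξ₀ - ξ‖ < δ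
    obtain ⟨w', hw'mem, hwd⟩ := (hirr ξ₀ hξ₀ne).exists_dist_lt ξ hδpos
    obtain ⟨c, rfl⟩ := hw'mem
    set w : H := π c ξ₀ with hw
    have hwξ : ‖w - ξ‖ < δ := by rw [norm_sub_rev]; simpa [dist_eq_norm] using hwd
    -- apply h0
    obtain ⟨i, η, hη, happ⟩ :=
      h0 (insert (star c * c) (F.image fun a => star c * a * c)) δ hδpos
    have hcc := happ _ (Finset.mem_insert_self _ _)
    -- about norms
    have hwnorm : ‖w‖ ≤ 1 + δ := by
      calc ‖w‖ ≤ ‖w - ξ‖ + ‖ξ‖ := by simpa using norm_add_le (w - ξ) ξ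
      _ ≤ δ + 1 := by rw [hξ]; exact add_le_add hwξ.le le_rfl
      _ = 1 + δ := by ring
    have hw1 : |‖w‖ - 1| < δ := by
      rw [← hξ]
      calc |‖w‖ - ‖ξ‖| ≤ ‖w - ξ‖ := abs_norm_sub_norm_le w ξ
      _ < δ := hwξ
    have hw2 : |‖w‖^2 - 1| < 3 * δ := by
      have : ‖w‖^2 - 1 = (‖w‖ - 1) * (‖w‖ + 1) := by ring
      rw [this, abs_mul]
      have h1 : |‖w‖ + 1| ≤ 2 + δ := by
        rw [abs_of_nonneg (by positivity)]; linarith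
      calc |‖w‖ - 1| * |‖w‖ + 1| ≤ |‖w‖ - 1| * (2 + δ) := by gcongr
      _ < δ * (2 + δ) := by gcongr
      _ ≤ 3 * δ := by nlinarith [hδ8, hδpos.le]
    set v : Hi i := πi i c η with hv
    have hccπ : ⟪π (star c * c) ξ₀, ξ₀⟫ = (‖w‖ : ℂ)^2 := fell_aux_inner2 π c ξ₀
    have hccπi : ⟪πi i (star c * c) η, η⟫ = (‖v‖ : ℂ)^2 := fell_aux_inner2 (πi i) c η
    have hvw : |‖v‖^2 - ‖w‖^2| < δ := by
      have := hcc
      rw [hccπ, hccπi] at this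
      have h2 : ‖((‖w‖:ℂ)^2 - (‖v‖:ℂ)^2)‖ = |‖w‖^2 - ‖v‖^2| := by
        rw [show ((‖w‖:ℂ)^2 - (‖v‖:ℂ)^2) = (((‖w‖^2 - ‖v‖^2 : ℝ)) : ℂ) by push_cast; ring]
        exact Complex.norm_real _
      rw [h2] at this
      rwa [abs_sub_comm]
    have hv1 : |‖v‖^2 - 1| < 4 * δ := by
      calc |‖v‖^2 - 1| ≤ |‖v‖^2 - ‖w‖^2| + |‖w‖^2 - 1| := abs_sub_le _ _ _
      _ < δ + 3 * δ := by gcongr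
      _ = 4 * δ := by ring
    have hvsq : (1:ℝ)/2 ≤ ‖v‖^2 := by
      have := abs_lt.mp hv1
      nlinarith [hδ8]
    have hvne : v ≠ 0 := by
      intro h
      rw [h, norm_zero] at hvsq; norm_num at hvsq
    have hvnorm0 : (0:ℝ) < ‖v‖ := norm_pos_iff.mpr hvne
    refine ⟨i, ((‖v‖:ℂ))⁻¹ • v, ?_, ?_⟩
    · rw [norm_smul, norm_inv, Complex.norm_real, norm_norm, inv_mul_cancel₀ hvnorm0.ne']
    intro a haF
    have haM : ‖a‖ ≤ M := hMb a haF
    -- term 2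
    have hT2 : ‖⟪π (star c * a * c) ξ₀, ξ₀⟫ - ⟪πi i (star c * a * c) η, η⟫‖ < δ :=
      happ _ (Finset.mem_insert_of_mem (Finset.mem_image_of_mem _ haF))
    -- rewrite both sides
    have hLHS : ⟪π (star c * a * c) ξ₀, ξ₀⟫ = ⟪π a w, w⟫ := fell_aux_inner π c a c ξ₀ ξ₀
    have hRHS : ⟪πi i (star c * a * c) η, η⟫ = ⟪πi i a v, v⟫ := fell_aux_inner (πi i) c a c η η
    rw [hLHS, hRHS] at hT2
    -- term 1 : ‖⟪π a ξ, ξ⟫ - ⟪π a w, w⟫‖ ≤ 3 M δ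
    have hT1 : ‖⟪π a ξ, ξ⟫ - ⟪π a w, w⟫‖ ≤ 3 * M * δ := by
      have e1 : ⟪π a ξ, ξ⟫ - ⟪π a w, w⟫ = ⟪π a (ξ - w), ξ⟫ + ⟪π a w, ξ - w⟫ := by
        simp only [map_sub, inner_sub_left, inner_sub_right]
        ring
      rw [e1]
      calc ‖⟪π a (ξ - w), ξ⟫ + ⟪π a w, ξ - w⟫‖
          ≤ ‖⟪π a (ξ - w), ξ⟫‖ + ‖⟪π a w, ξ - w⟫‖ := norm_add_le _ _
      _ ≤ ‖π a (ξ - w)‖ * ‖ξ‖ + ‖π a w‖ * ‖ξ - w‖ := by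
          gcongr <;> exact norm_inner_le_norm _ _
      _ ≤ (‖a‖ * ‖ξ - w‖) * ‖ξ‖ + (‖a‖ * ‖w‖) * ‖ξ - w‖ := by
          gcongr <;> exact fell_aux_norm _ _ _
      _ ≤ (M * δ) * 1 + (M * (1 + δ)) * δ := by
          rw [hξ]
          have h1 : ‖ξ - w‖ ≤ δ := by rw [← neg_sub, norm_neg]; exact hwξ.le
          gcongr
      _ ≤ 3 * M * δ := by
          nlinarith [mul_le_mul_of_nonneg_left hδ8 (mul_nonneg hM0.le hδpos.le),
            mul_pos hM0 hδpos]
    -- term 3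
    have hinner3 : ⟪πi i a (((‖v‖:ℂ))⁻¹ • v), ((‖v‖:ℂ))⁻¹ • v⟫
        = ((‖v‖^2 : ℝ)⁻¹ : ℂ) * ⟪πi i a v, v⟫ := by
      rw [map_smul, inner_smul_left, inner_smul_right, map_inv₀, Complex.conj_ofReal]
      push_cast
      rw [sq]
      field_simp
    have hT3 : ‖⟪πi i a v, v⟫ - ⟪πi i a (((‖v‖:ℂ))⁻¹ • v), ((‖v‖:ℂ))⁻¹ • v⟫‖ ≤ 4 * M * δ := by
      rw [hinner3]
      have e2 : ⟪πi i a v, v⟫ - ((‖v‖^2 : ℝ)⁻¹ : ℂ) * ⟪πi i a v, v⟫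
          = (1 - ((‖v‖^2 : ℝ)⁻¹ : ℂ)) * ⟪πi i a v, v⟫ := by ring
      rw [e2, norm_mul]
      have hb1 : ‖(1 - ((‖v‖^2 : ℝ)⁻¹ : ℂ))‖ = |1 - (‖v‖^2)⁻¹| := by
        rw [show (1 - ((‖v‖^2:ℝ)⁻¹ : ℂ)) = (((1 - (‖v‖^2)⁻¹ : ℝ)) : ℂ) by push_cast; ring]
        exact Complex.norm_real _
      have hb2 : ‖⟪πi i a v, v⟫‖ ≤ ‖a‖ * ‖v‖^2 := by
        calc ‖⟪πi i a v, v⟫‖ ≤ ‖πi i a v‖ * ‖v‖ := norm_inner_le_norm _ _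
        _ ≤ (‖a‖ * ‖v‖) * ‖v‖ := by gcongr; exact fell_aux_norm _ _ _
        _ = ‖a‖ * ‖v‖^2 := by ring
      rw [hb1]
      have hvsq0 : (0:ℝ) < ‖v‖^2 := by positivity
      have he : |1 - (‖v‖^2)⁻¹| = |‖v‖^2 - 1| / ‖v‖^2 := by
        have hee : (1 - (‖v‖^2)⁻¹) = (‖v‖^2 - 1)/(‖v‖^2) := by field_simp
        rw [hee, abs_div, abs_of_pos hvsq0]
      calc |1 - (‖v‖^2)⁻¹| * ‖⟪πi i a v, v⟫‖
          ≤ (|‖v‖^2 - 1| / ‖v‖^2) * (‖a‖ * ‖v‖^2) := by rw [he]; gcongr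
      _ = |‖v‖^2 - 1| * ‖a‖ := by field_simp
      _ ≤ (4 * δ) * M :=
          mul_le_mul hv1.le haM (norm_nonneg a) (by positivity)
      _ = 4 * M * δ := by ring
    -- combine
    calc ‖⟪π a ξ, ξ⟫ - ⟪πi i a (((‖v‖:ℂ))⁻¹ • v), ((‖v‖:ℂ))⁻¹ • v⟫‖
        ≤ ‖⟪π a ξ, ξ⟫ - ⟪π a w, w⟫‖ + ‖⟪π a w, w⟫ - ⟪πi i a v, v⟫‖
          + ‖⟪πi i a v, v⟫ - ⟪πi i a (((‖v‖:ℂ))⁻¹ • v), ((‖v‖:ℂ))⁻¹ • v⟫‖ := by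
          calc ‖⟪π a ξ, ξ⟫ - ⟪πi i a (((‖v‖:ℂ))⁻¹ • v), ((‖v‖:ℂ))⁻¹ • v⟫‖
              ≤ ‖⟪π a ξ, ξ⟫ - ⟪πi i a v, v⟫‖
                + ‖⟪πi i a v, v⟫ - ⟪πi i a (((‖v‖:ℂ))⁻¹ • v), ((‖v‖:ℂ))⁻¹ • v⟫‖ :=
                norm_sub_le_norm_sub_add_norm_sub _ _ _
          _ ≤ ‖⟪π a ξ, ξ⟫ - ⟪π a w, w⟫‖ + ‖⟪π a w, w⟫ - ⟪πi i a v, v⟫‖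
                + ‖⟪πi i a v, v⟫ - ⟪πi i a (((‖v‖:ℂ))⁻¹ • v), ((‖v‖:ℂ))⁻¹ • v⟫‖ := by
              gcongr
              exact norm_sub_le_norm_sub_add_norm_sub _ _ _
    _ < 3 * M * δ + δ + 4 * M * δ :=
        add_lt_add_of_lt_of_le (add_lt_add_of_le_of_lt hT1 hT2) hT3
    _ ≤ 8 * M * δ := by nlinarith [hM1, hδpos.le]
    _ ≤ 8 * M * (ε / (16 * M)) := by gcongr
    _ = ε / 2 := by field_simp; ring
    _ < ε := by linarith
  · -- Part 2
    intro a ha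
    have key : ∀ b c : A, ⟪π a (π c ξ₀), π b ξ₀⟫ = 0 := by
      intro b c
      have h1 : ∀ ε : ℝ, 0 < ε → ‖⟪π (star b * a * c) ξ₀, ξ₀⟫‖ < ε := by
        intro ε hε
        obtain ⟨i, η, hη, happ⟩ := h0 {star b * a * c} ε hε
        have := happ _ (Finset.mem_singleton_self _)
        have hz : πi i (star b * a * c) = 0 := by
          rw [map_mul, map_mul, ha i, mul_zero, zero_mul]
        rw [hz] at this
        simp only [ContinuousLinearMap.zero_apply, inner_zero_left, sub_zero] at this
        exact this
      have h2 : ⟪π (star b * a * c) ξ₀, ξ₀⟫ = 0 := by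
        by_contra h
        have := h1 (‖⟪π (star b * a * c) ξ₀, ξ₀⟫‖ ) (norm_pos_iff.mpr h)
        exact lt_irrefl _ this
      rw [← fell_aux_inner π b a c ξ₀ ξ₀]
      exact h2
    -- extend by density
    have key2 : ∀ x y : H, ⟪π a x, y⟫ = 0 := by
      have hd := hirr ξ₀ hξ₀ne
      intro x y
      have step1 : ∀ x ∈ Set.range (fun c : A => π c ξ₀), ∀ y' : H, ⟪π a x, y'⟫ = 0 := by
        rintro _ ⟨c, rfl⟩ y'
        have : Set.EqOn (fun y' => ⟪π a (π c ξ₀), y'⟫) (fun _ => (0:ℂ))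
            (Set.range fun b : A => π b ξ₀) := by
          rintro _ ⟨b, rfl⟩
          exact key b c
        have heq := Continuous.ext_on hd
          (Continuous.inner continuous_const continuous_id) continuous_const this
        exact congrFun heq y'
      have : Set.EqOn (fun x => ⟪π a x, y⟫) (fun _ => (0:ℂ))
          (Set.range fun c : A => π c ξ₀) := fun x hx => step1 x hx y
      have heq := Continuous.ext_on hd
        (Continuous.inner (π a).continuous continuous_const) continuous_const this
      exact congrFun heq x
    ext x
    have h := inner_self_eq_zero.mp (key2 x (π a x))
    simpa using h
end

section
/- Let X be a topological space on which a group Γ acts by homeomorphisms. Define an equivalence relation on X by x ∼ y iff the closures of the orbits Γ·x and Γ·y coincide. Then the quotient map q : X → X/∼ satisfies: q(x) lies in the closure of q(Y) for a Γ-invariant set Y ⊆ X if and only if x lies in the closure of Y; in particular the map sending closed Γ-invariant subsets of X to closed subsets of X/∼, A ↦ q(A), is a bijection onto the closed sets of the quotient space, provided the quotient map q is open. -/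
open Pointwise

/-- let a group `Γ` act by homeomorphisms on a topological space `X`, and let
`s` be the equivalence relation `x ∼ y ↔ closure (Γ·x) = closure (Γ·y)`.  Then for the
quotient map `q : X → X/∼` (with the quotient topology):
(1) for every `Γ`-invariant `Y ⊆ X` and `x ∈ X`, `q(x) ∈ closure (q(Y))` iff `x ∈ closure Y`;
(2) provided `q` is open, `A ↦ q(A)` is a bijection from the closed `Γ`-invariant subsets of
`X` onto the closed subsets of the quasi-orbit space `X/∼`. -/
theorem stmt18 (X Γ : Type) [TopologicalSpace X] [Group Γ] [MulAction Γ X]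
    (hcont : ∀ γ : Γ, Continuous fun x : X => γ • x)
    (s : Setoid X)
    (hs : ∀ x y : X, s.r x y ↔ closure (MulAction.orbit Γ x) = closure (MulAction.orbit Γ y)) :
    (∀ Y : Set X, (∀ γ : Γ, γ • Y = Y) → ∀ x : X,
        Quotient.mk s x ∈ closure (Quotient.mk s '' Y) ↔ x ∈ closure Y)
    ∧ (IsOpenMap (Quotient.mk s) →
        Set.BijOn (fun A : Set X => Quotient.mk s '' A)
          {A : Set X | IsClosed A ∧ ∀ γ : Γ, γ • A = A}
          {B : Set (Quotient s) | IsClosed B}) := by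
  set q : X → Quotient s := Quotient.mk s with hqdef
  -- the quotient map is a quotient map
  have hq : Topology.IsQuotientMap q := isQuotientMap_quot_mk
  -- key: for closed Γ-invariant Y, if q x = q y with y ∈ Y then x ∈ Y
  have key : ∀ Y : Set X, IsClosed Y → (∀ γ : Γ, γ • Y = Y) →
      ∀ x y : X, y ∈ Y → s.r x y → x ∈ Y := by
    intro Y hYc hYi x y hy hxy
    have horb : MulAction.orbit Γ y ⊆ Y := by
      rintro _ ⟨γ, rfl⟩
      rw [← hYi γ]
      exact Set.smul_mem_smul_set hy
    have h1 : closure (MulAction.orbit Γ y) ⊆ Y := hYc.closure_subset_iff.mpr horb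
    have hx : x ∈ closure (MulAction.orbit Γ x) :=
      subset_closure (MulAction.mem_orbit_self x)
    rw [(hs x y).mp hxy] at hx
    exact h1 hx
  -- closure of an invariant set is invariant
  have hclos_inv : ∀ Y : Set X, (∀ γ : Γ, γ • Y = Y) → ∀ γ : Γ, γ • closure Y = closure Y := by
    intro Y hYi
    have hsub : ∀ γ : Γ, γ • closure Y ⊆ closure Y := by
      intro γ
      calc γ • closure Y ⊆ closure (γ • Y) := by
            rw [← Set.image_smul, ← Set.image_smul]
            exact image_closure_subset_closure_image (hcont γ)
        _ = closure Y := by rw [hYi γ]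
    intro γ
    refine subset_antisymm (hsub γ) ?_
    have := Set.smul_set_mono (a := γ) (hsub γ⁻¹)
    rwa [smul_inv_smul] at this
  -- part 1
  have part1 : ∀ Y : Set X, (∀ γ : Γ, γ • Y = Y) → ∀ x : X,
      q x ∈ closure (q '' Y) ↔ x ∈ closure Y := by
    intro Y hYi x
    have hBclosed : IsClosed (q '' closure Y) := by
      rw [← hq.isClosed_preimage]
      have : q ⁻¹' (q '' closure Y) = closure Y := by
        apply subset_antisymm
        · rintro z hz
          obtain ⟨y, hy, hqy⟩ := hz
          exact key (closure Y) isClosed_closure (hclos_inv Y hYi) z y hy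
            (Quotient.exact hqy.symm)
        · exact Set.subset_preimage_image q (closure Y)
      rw [this]
      exact isClosed_closure
    constructor
    · intro hx
      have hsub : closure (q '' Y) ⊆ q '' closure Y :=
        hBclosed.closure_subset_iff.mpr (Set.image_mono (f := q) subset_closure)
      obtain ⟨y, hy, hqy⟩ := hsub hx
      exact key (closure Y) isClosed_closure (hclos_inv Y hYi) x y hy
        (Quotient.exact hqy.symm)
    · intro hx
      have : q x ∈ q '' closure Y := Set.mem_image_of_mem q hx
      have h2 : q '' closure Y ⊆ closure (q '' Y) := by
        exact image_closure_subset_closure_image hq.continuous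
      exact h2 this
  refine ⟨part1, ?_⟩
  intro _hopen
  -- q (γ • x) = q x
  have hqsmul : ∀ (γ : Γ) (x : X), q (γ • x) = q x := by
    intro γ x
    exact Quotient.sound ((hs _ _).mpr (by rw [MulAction.orbit_smul]))
  constructor
  · -- MapsTo
    intro A hA
    obtain ⟨hAc, hAi⟩ := hA
    show IsClosed (q '' A)
    rw [← hq.isClosed_preimage]
    have : q ⁻¹' (q '' A) = A := by
      apply subset_antisymm
      · rintro z ⟨y, hy, hqy⟩
        exact key A hAc hAi z y hy (Quotient.exact hqy.symm)
      · exact Set.subset_preimage_image q A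
    rw [this]; exact hAc
  constructor
  · -- InjOn
    intro A hA A' hA' hE
    have hE' : q '' A = q '' A' := hE
    obtain ⟨hAc, hAi⟩ := hA
    obtain ⟨hA'c, hA'i⟩ := hA'
    apply subset_antisymm
    · intro x hx
      have : q x ∈ q '' A' := by rw [← hE']; exact Set.mem_image_of_mem q hx
      obtain ⟨y, hy, hqy⟩ := this
      exact key A' hA'c hA'i x y hy (Quotient.exact hqy.symm)
    · intro x hx
      have : q x ∈ q '' A := by rw [hE']; exact Set.mem_image_of_mem q hx
      obtain ⟨y, hy, hqy⟩ := this
      exact key A hAc hAi x y hy (Quotient.exact hqy.symm)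
  · -- SurjOn
    intro B hB
    refine ⟨q ⁻¹' B, ⟨hq.isClosed_preimage.mpr hB, ?_⟩, ?_⟩
    · intro γ
      ext x
      constructor
      · rintro ⟨y, hy, rfl⟩
        show q (γ • y) ∈ B
        rw [hqsmul]; exact hy
      · intro hx
        refine ⟨γ⁻¹ • x, ?_, by simp⟩
        show q (γ⁻¹ • x) ∈ B
        rw [hqsmul]; exact hx
    · show q '' (q ⁻¹' B) = B
      exact Set.image_preimage_eq B (fun b => Quotient.exists_rep b)
end
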